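/- Let L : Y × U → ℝ and S : U → Y be twice continuously Fréchet differentiable maps between Banach spaces, and define J(x) = L(S(x), x). Suppose at x̄ ∈ U, with ȳ = S(x̄), we have L_y(ȳ, x̄) = 0. Then DJ(x̄) = L_x(ȳ, x̄), and D²J(x̄).(h,k) = D²L(ȳ, x̄).((DS(x̄)h, h), (DS(x̄)k, k)); in particular the term involving D²S(x̄) vanishes. -/

import Mathlib

open Set ContinuousLinearMap

/-- Abstract Lagrangian reduction (used in Propositions 3.5 and 3.6): if
`J(x) = L(S(x), x)` and the partial derivative `L_y(S(x̄), x̄)` vanishes, then the first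
derivative of `J` at `x̄` is `L_x(ȳ, x̄)` and the second derivative is
`D²L(ȳ,x̄).((DS(x̄)h, h),(DS(x̄)k, k))`; the term involving `D²S(x̄)` vanishes. -/
theorem stmt_16 {Y U : Type*} [NormedAddCommGroup Y] [NormedSpace ℝ Y]
    [NormedAddCommGroup U] [NormedSpace ℝ U]
    (L : Y × U → ℝ) (hL : ContDiff ℝ 2 L)
    (S : U → Y) (hS : ContDiff ℝ 2 S)
    (J : U → ℝ) (hJ : ∀ x, J x = L (S x, x))
    (xbar : U)
    (hLy : ∀ v : Y, fderiv ℝ L (S xbar, xbar) (v, 0) = 0) :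
    (∀ h : U, fderiv ℝ J xbar h = fderiv ℝ L (S xbar, xbar) (0, h)) ∧
    (∀ h k : U, fderiv ℝ (fderiv ℝ J) xbar h k
        = fderiv ℝ (fderiv ℝ L) (S xbar, xbar)
            (fderiv ℝ S xbar h, h) (fderiv ℝ S xbar k, k)) := by
  have hSdiff : ∀ x, HasFDerivAt S (fderiv ℝ S x) x := fun x =>
    ((hS.differentiable (by norm_num)) x).hasFDerivAt
  set G : U → Y × U := fun x => (S x, x) with hGdef
  have hG : ∀ x, HasFDerivAt G ((fderiv ℝ S x).prod (ContinuousLinearMap.id ℝ U)) x :=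
    fun x => (hSdiff x).prodMk (hasFDerivAt_id x)
  have hJfun : J = fun x => L (G x) := funext hJ
  have hJder : ∀ x, HasFDerivAt J
      ((fderiv ℝ L (G x)).comp ((fderiv ℝ S x).prod (ContinuousLinearMap.id ℝ U))) x := by
    intro x
    rw [hJfun]
    exact (((hL.differentiable (by norm_num)) (G x)).hasFDerivAt).comp x (hG x)
  have hfJ : fderiv ℝ J = fun x =>
      (fderiv ℝ L (G x)).comp ((fderiv ℝ S x).prod (ContinuousLinearMap.id ℝ U)) :=
    funext fun x => (hJder x).fderiv
  constructor
  · intro h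
    rw [hfJ]
    have e1 : ((fderiv ℝ S xbar) h, h) = ((fderiv ℝ S xbar h, 0) : Y × U) + (0, h) := by simp
    simp only [comp_apply, prod_apply, coe_id', id_eq]
    rw [e1, map_add, hLy, zero_add]
  · intro h k
    -- derivative of x ↦ fderiv L (G x)
    have hLL : HasFDerivAt (fderiv ℝ L) (fderiv ℝ (fderiv ℝ L) (G xbar)) (G xbar) :=
      (((hL.fderiv_right (m := 1) (by norm_num)).differentiable (by norm_num)) (G xbar)).hasFDerivAt
    have hc : HasFDerivAt (fun x => fderiv ℝ L (G x))
        ((fderiv ℝ (fderiv ℝ L) (G xbar)).comp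
          ((fderiv ℝ S xbar).prod (ContinuousLinearMap.id ℝ U))) xbar :=
      hLL.comp xbar (hG xbar)
    -- derivative of x ↦ (fderiv S x).prod id
    have hS' : HasFDerivAt (fderiv ℝ S) (fderiv ℝ (fderiv ℝ S) xbar) xbar :=
      (((hS.fderiv_right (m := 1) (by norm_num)).differentiable (by norm_num)) xbar).hasFDerivAt
    have hdfun : (fun x => (fderiv ℝ S x).prod (ContinuousLinearMap.id ℝ U)) =
        fun x => (compL ℝ U Y (Y × U) (inl ℝ Y U)) (fderiv ℝ S x) + inr ℝ Y U := by
      funext x; ext u <;> simp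
    have hd : HasFDerivAt (fun x => (fderiv ℝ S x).prod (ContinuousLinearMap.id ℝ U))
        ((compL ℝ U Y (Y × U) (inl ℝ Y U)).comp (fderiv ℝ (fderiv ℝ S) xbar)) xbar := by
      rw [hdfun]
      exact ((compL ℝ U Y (Y × U) (inl ℝ Y U)).hasFDerivAt.comp xbar hS').add_const _
    have hD := hc.clm_comp hd
    have h2 : fderiv ℝ (fderiv ℝ J) xbar =
        ((compL ℝ U (Y × U) ℝ (fderiv ℝ L (G xbar))).comp
            ((compL ℝ U Y (Y × U) (inl ℝ Y U)).comp (fderiv ℝ (fderiv ℝ S) xbar)) +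
          ((compL ℝ U (Y × U) ℝ).flip
              ((fderiv ℝ S xbar).prod (ContinuousLinearMap.id ℝ U))).comp
            ((fderiv ℝ (fderiv ℝ L) (G xbar)).comp
              ((fderiv ℝ S xbar).prod (ContinuousLinearMap.id ℝ U)))) := by
      rw [hfJ]
      exact hD.fderiv
    rw [h2]
    simp only [add_apply, comp_apply, compL_apply, flip_apply, prod_apply, coe_id',
      id_eq, inl_apply]
    rw [hLy, zero_add]
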